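/- arXiv:1205.4146 — 2 statements merged into one kernel-verified Lean document; each statement's English description precedes it below -/
import Mathlib

section
/- Let a ≥ 1, b > 0 and x ∈ (0,1) with x > (a−1)/(a+b). Then (1−x)^b x^{a−1} / (B(a,b) b) ≤ P[B_{a,b} > x] ≤ (1−x)^b x^{a−1} (1 + L(a,b,x)) / (B(a,b) b). -/
open Real Set MeasureTheory

noncomputable section

private lemma beta_integrand_integrable {a b x : ℝ} (hb : 0 < b) (hx0 : 0 < x) (hx1 : x < 1) :
    IntervalIntegrable (fun t => t ^ (a - 1) * (1 - t) ^ (b - 1)) volume x 1 := by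
  have h1 : IntervalIntegrable (fun t : ℝ => t ^ (b - 1)) volume 0 (1 - x) :=
    intervalIntegral.intervalIntegrable_rpow' (by linarith)
  have h2 : IntervalIntegrable (fun t : ℝ => (1 - t) ^ (b - 1)) volume x 1 := by
    have := (h1.comp_sub_left 1).symm
    simpa using this
  apply h2.continuousOn_mul
  rw [uIcc_of_le hx1.le]
  exact ContinuousOn.rpow_const continuousOn_id
    (fun t ht => Or.inl (ne_of_gt (lt_of_lt_of_le hx0 ht.1)))

private lemma beta_tail_lower {a b x : ℝ} (ha : 1 ≤ a) (hb : 0 < b) (hx0 : 0 < x)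
    (hx1 : x < 1) :
    x ^ (a - 1) * (1 - x) ^ b / b ≤ ∫ t in x..1, t ^ (a - 1) * (1 - t) ^ (b - 1) := by
  set h : ℝ → ℝ := fun t =>
    t ^ (a - 1) * (1 - t) ^ (b - 1) - (a - 1) * (t ^ (a - 2) * (1 - t) ^ b) / b with hhdef
  have hfint := beta_integrand_integrable (a := a) hb hx0 hx1
  have hcint : IntervalIntegrable (fun t => (a - 1) * (t ^ (a - 2) * (1 - t) ^ b) / b)
      volume x 1 := by
    apply ContinuousOn.intervalIntegrable
    rw [uIcc_of_le hx1.le]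
    apply ContinuousOn.div_const
    apply ContinuousOn.mul continuousOn_const
    apply ContinuousOn.mul
    · exact ContinuousOn.rpow_const continuousOn_id
        (fun t ht => Or.inl (ne_of_gt (lt_of_lt_of_le hx0 ht.1)))
    · exact ContinuousOn.rpow_const (continuousOn_const.sub continuousOn_id)
        (fun t ht => Or.inr hb.le)
  have hhint : IntervalIntegrable h volume x 1 := hfint.sub hcint
  have key : ∫ t in x..1, h t = x ^ (a - 1) * (1 - x) ^ b / b := by
    have hcont : ContinuousOn (fun t => -(t ^ (a - 1) * (1 - t) ^ b) / b) (Icc x 1) := by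
      apply ContinuousOn.div_const
      apply ContinuousOn.neg
      apply ContinuousOn.mul
      · exact ContinuousOn.rpow_const continuousOn_id
          (fun t ht => Or.inl (ne_of_gt (lt_of_lt_of_le hx0 ht.1)))
      · exact ContinuousOn.rpow_const (continuousOn_const.sub continuousOn_id)
          (fun t ht => Or.inr hb.le)
    have hderiv : ∀ t ∈ Ioo x 1,
        HasDerivWithinAt (fun t => -(t ^ (a - 1) * (1 - t) ^ b) / b) (h t) (Ioi t) t := by
      intro t ht
      have ht0 : 0 < t := lt_trans hx0 ht.1
      have ht1 : (0:ℝ) < 1 - t := by linarith [ht.2]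
      have d1 : HasDerivAt (fun t : ℝ => t ^ (a - 1)) ((a - 1) * t ^ (a - 1 - 1)) t :=
        Real.hasDerivAt_rpow_const (Or.inl ht0.ne')
      have d2 : HasDerivAt (fun t : ℝ => (1 - t) ^ b) (b * (1 - t) ^ (b - 1) * (-1)) t := by
        have base : HasDerivAt (fun t : ℝ => 1 - t) (-1) t := (hasDerivAt_id t).const_sub 1
        exact (Real.hasDerivAt_rpow_const (Or.inl ht1.ne')).comp t base
      have d3 := (((d1.mul d2).neg).div_const b)
      have heq : -((a - 1) * t ^ (a - 1 - 1) * (1 - t) ^ b +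
          t ^ (a - 1) * (b * (1 - t) ^ (b - 1) * (-1))) / b = h t := by
        have e : a - 1 - 1 = a - 2 := by ring
        rw [e, hhdef]
        field_simp
        ring
      rw [heq] at d3
      exact d3.hasDerivWithinAt
    have := intervalIntegral.integral_eq_sub_of_hasDeriv_right_of_le hx1.le hcont hderiv hhint
    rw [this, show (1:ℝ) - 1 = 0 by ring, Real.zero_rpow hb.ne']
    ring
  have mono : ∫ t in x..1, h t ≤ ∫ t in x..1, t ^ (a - 1) * (1 - t) ^ (b - 1) := by
    apply intervalIntegral.integral_mono_on hx1.le hhint hfint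
    intro t ht
    have ht0 : 0 < t := lt_of_lt_of_le hx0 ht.1
    have ht1 : (0:ℝ) ≤ 1 - t := by linarith [ht.2]
    have : 0 ≤ (a - 1) * (t ^ (a - 2) * (1 - t) ^ b) / b := by
      apply div_nonneg _ hb.le
      exact mul_nonneg (by linarith) (mul_nonneg (Real.rpow_nonneg ht0.le _)
        (Real.rpow_nonneg ht1 _))
    simp only [hhdef]
    linarith
  linarith [key, mono]

private lemma beta_tail_upper {a b x : ℝ} (ha : 1 ≤ a) (hb : 0 < b) (hx0 : 0 < x)
    (hx1 : x < 1) (hx : a - 1 < (a + b) * x) :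
    (∫ t in x..1, t ^ (a - 1) * (1 - t) ^ (b - 1)) ≤
      (b + 1) * (x ^ a * (1 - x) ^ b) / (b * (1 - a + (a + b) * x)) := by
  have hab : 0 < a + b := by linarith
  have hD : ∀ t ∈ Icc x 1, 0 < 1 - a + (a + b) * t := by
    intro t ht
    nlinarith [ht.1]
  set g : ℝ → ℝ := fun t => t ^ (a - 1) * (1 - t) ^ (b - 1) +
    (a - 1) * (a + b) * (t ^ (a - 1) * (1 - t) ^ (b + 1)) / (b * (1 - a + (a + b) * t) ^ 2)
    with hgdef
  have hfint := beta_integrand_integrable (a := a) hb hx0 hx1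
  have hcint : IntervalIntegrable (fun t => (a - 1) * (a + b) *
      (t ^ (a - 1) * (1 - t) ^ (b + 1)) / (b * (1 - a + (a + b) * t) ^ 2)) volume x 1 := by
    apply ContinuousOn.intervalIntegrable
    rw [uIcc_of_le hx1.le]
    apply ContinuousOn.div
    · apply ContinuousOn.mul continuousOn_const
      apply ContinuousOn.mul
      · exact ContinuousOn.rpow_const continuousOn_id
          (fun t ht => Or.inl (ne_of_gt (lt_of_lt_of_le hx0 ht.1)))
      · exact ContinuousOn.rpow_const (continuousOn_const.sub continuousOn_id)
          (fun t ht => Or.inr (by linarith))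
    · exact continuousOn_const.mul
        (((continuousOn_const.add (continuousOn_const.mul continuousOn_id)).pow 2))
    · intro t ht
      have := hD t ht
      positivity
  have hgint : IntervalIntegrable g volume x 1 := hfint.add hcint
  have key : ∫ t in x..1, g t =
      (b + 1) * (x ^ a * (1 - x) ^ b) / (b * (1 - a + (a + b) * x)) := by
    have hcont : ContinuousOn
        (fun t => -((b + 1) * (t ^ a * (1 - t) ^ b) / (b * (1 - a + (a + b) * t))))
        (Icc x 1) := by
      apply ContinuousOn.neg
      apply ContinuousOn.div
      · apply ContinuousOn.mul continuousOn_const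
        apply ContinuousOn.mul
        · exact ContinuousOn.rpow_const continuousOn_id
            (fun t ht => Or.inl (ne_of_gt (lt_of_lt_of_le hx0 ht.1)))
        · exact ContinuousOn.rpow_const (continuousOn_const.sub continuousOn_id)
            (fun t ht => Or.inr hb.le)
      · exact continuousOn_const.mul
          (continuousOn_const.add (continuousOn_const.mul continuousOn_id))
      · intro t ht
        have := hD t ht
        positivity
    have hderiv : ∀ t ∈ Ioo x 1,
        HasDerivWithinAt
          (fun t => -((b + 1) * (t ^ a * (1 - t) ^ b) / (b * (1 - a + (a + b) * t))))
          (g t) (Ioi t) t := by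
      intro t ht
      have ht0 : 0 < t := lt_trans hx0 ht.1
      have ht1 : (0:ℝ) < 1 - t := by linarith [ht.2]
      have htD : 0 < 1 - a + (a + b) * t := hD t ⟨ht.1.le, ht.2.le⟩
      have htDb : b * (1 - a + (a + b) * t) ≠ 0 := by positivity
      have d1 : HasDerivAt (fun t : ℝ => t ^ a) (a * t ^ (a - 1)) t :=
        Real.hasDerivAt_rpow_const (Or.inl ht0.ne')
      have d2 : HasDerivAt (fun t : ℝ => (1 - t) ^ b) (b * (1 - t) ^ (b - 1) * (-1)) t := by
        have base : HasDerivAt (fun t : ℝ => 1 - t) (-1) t := (hasDerivAt_id t).const_sub 1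
        exact (Real.hasDerivAt_rpow_const (Or.inl ht1.ne')).comp t base
      have dN : HasDerivAt (fun t : ℝ => (b + 1) * (t ^ a * (1 - t) ^ b))
          ((b + 1) * (a * t ^ (a - 1) * (1 - t) ^ b +
            t ^ a * (b * (1 - t) ^ (b - 1) * (-1)))) t :=
        (d1.mul d2).const_mul (b + 1)
      have dD : HasDerivAt (fun t : ℝ => b * (1 - a + (a + b) * t)) (b * ((a + b) * 1)) t :=
        (((hasDerivAt_id t).const_mul (a + b)).const_add (1 - a)).const_mul b
      have d3 := ((dN.div dD htDb).neg)
      have heq : -(((b + 1) * (a * t ^ (a - 1) * (1 - t) ^ b +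
            t ^ a * (b * (1 - t) ^ (b - 1) * (-1))) * (b * (1 - a + (a + b) * t)) -
          (b + 1) * (t ^ a * (1 - t) ^ b) * (b * ((a + b) * 1))) /
          (b * (1 - a + (a + b) * t)) ^ 2) = g t := by
        have e1 : t ^ a = t ^ (a - 1) * t := by
          rw [← Real.rpow_add_one ht0.ne' (a - 1), sub_add_cancel]
        have e2 : (1 - t) ^ b = (1 - t) ^ (b - 1) * (1 - t) := by
          rw [← Real.rpow_add_one ht1.ne' (b - 1), sub_add_cancel]
        have e3 : (1 - t) ^ (b + 1) = (1 - t) ^ (b - 1) * ((1 - t) * (1 - t)) := by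
          rw [show b + 1 = b - 1 + 1 + 1 by ring, Real.rpow_add_one ht1.ne',
            Real.rpow_add_one ht1.ne']
          ring
        rw [hgdef]
        simp only [e1, e2, e3]
        have hbne : b ≠ 0 := hb.ne'
        have hDne : 1 - a + (a + b) * t ≠ 0 := htD.ne'
        have hDne2 : 1 - a + t * (a + b) ≠ 0 := by rw [mul_comm]; exact hDne
        field_simp
        ring
      rw [heq] at d3
      exact d3.hasDerivWithinAt
    have := intervalIntegral.integral_eq_sub_of_hasDeriv_right_of_le hx1.le hcont hderiv hgint
    rw [this, show (1:ℝ) - 1 = 0 by ring, Real.zero_rpow hb.ne']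
    ring
  have mono : ∫ t in x..1, t ^ (a - 1) * (1 - t) ^ (b - 1) ≤ ∫ t in x..1, g t := by
    apply intervalIntegral.integral_mono_on hx1.le hfint hgint
    intro t ht
    have ht0 : 0 < t := lt_of_lt_of_le hx0 ht.1
    have ht1 : (0:ℝ) ≤ 1 - t := by linarith [ht.2]
    have htD := hD t ht
    have : 0 ≤ (a - 1) * (a + b) * (t ^ (a - 1) * (1 - t) ^ (b + 1)) /
        (b * (1 - a + (a + b) * t) ^ 2) := by
      apply div_nonneg _ (by positivity)
      exact mul_nonneg (mul_nonneg (by linarith) hab.le)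
        (mul_nonneg (Real.rpow_nonneg ht0.le _) (Real.rpow_nonneg ht1 _))
    simp only [hgdef]
    linarith
  linarith [key, mono]

/-- Lemma 1, case `a ≥ 1`: bounds for the tail of the Beta(a,b) distribution.  For
`x ∈ (0,1)` with `x > (a−1)/(a+b)`,
`(1−x)^b x^{a−1}/(B(a,b)b) ≤ P[B_{a,b} > x] ≤ (1−x)^b x^{a−1}(1 + L(a,b,x))/(B(a,b)b)`,
where `B(a,b) = Γ(a)Γ(b)/Γ(a+b)`, `P[B_{a,b} > x] = (1/B(a,b)) ∫_x^1 t^{a−1}(1−t)^{b−1} dt`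
and `L(a,b,x) = (a−1)(1−x)/(1 − a + (a+b)x)`. -/
theorem beta_tail_bounds_of_one_le (a b x : ℝ) (ha : 1 ≤ a) (hb : 0 < b)
    (hx0 : 0 < x) (hx1 : x < 1) (hx : (a - 1) / (a + b) < x) :
    (1 - x) ^ b * x ^ (a - 1) / ((Gamma a * Gamma b / Gamma (a + b)) * b) ≤
      (1 / (Gamma a * Gamma b / Gamma (a + b))) * ∫ t in x..1, t ^ (a - 1) * (1 - t) ^ (b - 1) ∧
    (1 / (Gamma a * Gamma b / Gamma (a + b))) * (∫ t in x..1, t ^ (a - 1) * (1 - t) ^ (b - 1)) ≤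
      (1 - x) ^ b * x ^ (a - 1) * (1 + (a - 1) * (1 - x) / (1 - a + (a + b) * x)) /
        ((Gamma a * Gamma b / Gamma (a + b)) * b) := by
  have hab : 0 < a + b := by linarith
  have hx' : a - 1 < (a + b) * x := by
    rw [div_lt_iff₀ hab] at hx
    linarith
  have hD : 0 < 1 - a + (a + b) * x := by linarith
  have hBeta : 0 < Gamma a * Gamma b / Gamma (a + b) :=
    div_pos (mul_pos (Real.Gamma_pos_of_pos (by linarith)) (Real.Gamma_pos_of_pos hb))
      (Real.Gamma_pos_of_pos hab)
  set Beta := Gamma a * Gamma b / Gamma (a + b) with hBdef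
  have hBne : Beta ≠ 0 := hBeta.ne'
  constructor
  · have hlow := beta_tail_lower ha hb hx0 hx1
    calc (1 - x) ^ b * x ^ (a - 1) / (Beta * b)
        = (1 / Beta) * (x ^ (a - 1) * (1 - x) ^ b / b) := by
          field_simp
      _ ≤ (1 / Beta) * ∫ t in x..1, t ^ (a - 1) * (1 - t) ^ (b - 1) := by
          apply mul_le_mul_of_nonneg_left hlow (by positivity)
  · have hup := beta_tail_upper ha hb hx0 hx1 hx'
    have e1 : x ^ a = x ^ (a - 1) * x := by
      rw [← Real.rpow_add_one hx0.ne' (a - 1), sub_add_cancel]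
    calc (1 / Beta) * (∫ t in x..1, t ^ (a - 1) * (1 - t) ^ (b - 1))
        ≤ (1 / Beta) * ((b + 1) * (x ^ a * (1 - x) ^ b) / (b * (1 - a + (a + b) * x))) :=
          mul_le_mul_of_nonneg_left hup (by positivity)
      _ = (1 - x) ^ b * x ^ (a - 1) * (1 + (a - 1) * (1 - x) / (1 - a + (a + b) * x)) /
          (Beta * b) := by
          rw [e1]
          have hDne := hD.ne'
          have hDne2 : 1 - a + x * (a + b) ≠ 0 := by rw [mul_comm]; exact hDne
          field_simp
          ring
end
end

section
/- Let 0 < a < 1, b > 0 and x ∈ (0,1) with x > (a−1)/(a+b). Then (1−x)^b x^{a−1} (1 + L(a,b,x)) / (B(a,b) b) ≤ P[B_{a,b} > x] ≤ (1−x)^b x^{a−1} / (B(a,b) b). -/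
open Real MeasureTheory Set intervalIntegral

noncomputable section

/-- Lemma 1, case `a < 1`: bounds for the tail of the Beta(a,b) distribution.  For
`x ∈ (0,1)` with `x > (a−1)/(a+b)`,
`(1−x)^b x^{a−1}(1 + L(a,b,x))/(B(a,b)b) ≤ P[B_{a,b} > x] ≤ (1−x)^b x^{a−1}/(B(a,b)b)`,
where `B(a,b) = Γ(a)Γ(b)/Γ(a+b)`, `P[B_{a,b} > x] = (1/B(a,b)) ∫_x^1 t^{a−1}(1−t)^{b−1} dt`
and `L(a,b,x) = (a−1)(1−x)/(1 − a + (a+b)x)`. -/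
theorem beta_tail_bounds_of_lt_one (a b x : ℝ) (ha0 : 0 < a) (ha : a < 1) (hb : 0 < b)
    (hx0 : 0 < x) (hx1 : x < 1) (hx : (a - 1) / (a + b) < x) :
    (1 - x) ^ b * x ^ (a - 1) * (1 + (a - 1) * (1 - x) / (1 - a + (a + b) * x)) /
        ((Gamma a * Gamma b / Gamma (a + b)) * b) ≤
      (1 / (Gamma a * Gamma b / Gamma (a + b))) * ∫ t in x..1, t ^ (a - 1) * (1 - t) ^ (b - 1) ∧
    (1 / (Gamma a * Gamma b / Gamma (a + b))) * (∫ t in x..1, t ^ (a - 1) * (1 - t) ^ (b - 1)) ≤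
      (1 - x) ^ b * x ^ (a - 1) / ((Gamma a * Gamma b / Gamma (a + b)) * b) := by
  have hab : 0 < a + b := by linarith
  have hDx : 0 < 1 - a + (a + b) * x := by
    have := (div_lt_iff₀ hab).mp hx
    nlinarith
  have hB : 0 < Gamma a * Gamma b / Gamma (a + b) :=
    div_pos (mul_pos (Gamma_pos_of_pos ha0) (Gamma_pos_of_pos hb)) (Gamma_pos_of_pos hab)
  -- integrability
  have h1 : IntervalIntegrable (fun t : ℝ => (1 - t) ^ (b - 1)) volume x 1 := by
    have := (intervalIntegral.intervalIntegrable_rpow' (a := 0) (b := 1 - x)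
      (r := b - 1) (by linarith)).comp_sub_left 1
    simpa using this.symm
  have hint : IntervalIntegrable (fun t : ℝ => t ^ (a - 1) * (1 - t) ^ (b - 1)) volume x 1 := by
    apply h1.continuousOn_mul
    apply ContinuousOn.rpow_const continuousOn_id
    intro t ht
    rw [uIcc_of_le hx1.le] at ht
    exact Or.inl (by simp; nlinarith [ht.1])
  -- upper bound on the integral
  have hupper : (∫ t in x..1, t ^ (a - 1) * (1 - t) ^ (b - 1))
      ≤ x ^ (a - 1) * ((1 - x) ^ b / b) := by
    have hiv : (∫ t in x..1, (1 - t) ^ (b - 1)) = (1 - x) ^ b / b := by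
      rw [show (fun t : ℝ => (1 - t) ^ (b - 1))
          = (fun t : ℝ => ((fun u : ℝ => u ^ (b - 1)) (1 - t))) from rfl,
        integral_comp_sub_left (fun u : ℝ => u ^ (b - 1)) 1]
      rw [integral_rpow (Or.inl (by linarith))]
      rw [sub_self, zero_rpow (by linarith : b - 1 + 1 ≠ 0), sub_add_cancel, sub_zero]
    calc (∫ t in x..1, t ^ (a - 1) * (1 - t) ^ (b - 1))
        ≤ ∫ t in x..1, x ^ (a - 1) * (1 - t) ^ (b - 1) := by
          apply integral_mono_on hx1.le hint (h1.const_mul _)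
          intro t ht
          have h0 : (0:ℝ) ≤ (1 - t) ^ (b - 1) := rpow_nonneg (by linarith [ht.2]) _
          exact mul_le_mul_of_nonneg_right
            (rpow_le_rpow_of_nonpos hx0 ht.1 (by linarith)) h0
      _ = x ^ (a - 1) * ((1 - x) ^ b / b) := by
          rw [intervalIntegral.integral_const_mul, hiv]
  -- lower bound on the integral
  have hlower : (b + 1) / b * (x ^ a * (1 - x) ^ b / (1 - a + (a + b) * x)) ≤
      ∫ t in x..1, t ^ (a - 1) * (1 - t) ^ (b - 1) := by
    set g : ℝ → ℝ := fun s => -((b + 1) / b * (s ^ a * (1 - s) ^ b / (1 - a + (a + b) * s))) with hg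
    set g' : ℝ → ℝ := fun s => -((b + 1) / b *
      (((a * s ^ (a - 1) * (1 - s) ^ b + s ^ a * (-1 * b * (1 - s) ^ (b - 1)))
          * (1 - a + (a + b) * s)
        - s ^ a * (1 - s) ^ b * (a + b)) / (1 - a + (a + b) * s) ^ 2)) with hg'
    have hDpos : ∀ t ∈ Icc x 1, 0 < 1 - a + (a + b) * t := fun t ht => by nlinarith [ht.1]
    have hcont : ContinuousOn g (Icc x 1) := by
      refine ContinuousOn.neg (ContinuousOn.mul continuousOn_const (ContinuousOn.div ?_ ?_ ?_))
      · exact (continuousOn_id.rpow_const fun t ht => Or.inr ha0.le).mul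
          ((continuousOn_const.sub continuousOn_id).rpow_const fun t ht => Or.inr hb.le)
      · exact (continuousOn_const.add (continuousOn_const.mul continuousOn_id))
      · exact fun t ht => (hDpos t ht).ne'
    have hderiv : ∀ t ∈ Ioo x 1, HasDerivAt g (g' t) t := by
      intro t ht
      have ht0 : (0:ℝ) < t := hx0.trans ht.1
      have ht1 : t < 1 := ht.2
      have hDt : (0:ℝ) < 1 - a + (a + b) * t := hDpos t ⟨ht.1.le, ht1.le⟩
      have h1' : HasDerivAt (fun s : ℝ => s ^ a) (a * t ^ (a - 1)) t :=
        Real.hasDerivAt_rpow_const (Or.inl ht0.ne')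
      have h2' : HasDerivAt (fun s : ℝ => (1 - s) ^ b) (-1 * b * (1 - t) ^ (b - 1)) t := by
        have := ((hasDerivAt_id t).const_sub 1).rpow_const
          (p := b) (Or.inl (by simp; linarith : (1:ℝ) - t ≠ 0))
        simpa using this
      have hD' : HasDerivAt (fun s : ℝ => 1 - a + (a + b) * s) (a + b) t := by
        simpa using (((hasDerivAt_id t).const_mul (a + b)).const_add (1 - a))
      exact (((h1'.mul h2').div hD' hDt.ne').const_mul ((b + 1) / b)).neg
    have hle : ∀ t ∈ Ioo x 1, g' t ≤ t ^ (a - 1) * (1 - t) ^ (b - 1) := by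
      intro t ht
      have ht0 : (0:ℝ) < t := hx0.trans ht.1
      have ht1 : t < 1 := ht.2
      have hDt : (0:ℝ) < 1 - a + (a + b) * t := hDpos t ⟨ht.1.le, ht1.le⟩
      have hP : (0:ℝ) < t ^ (a - 1) := rpow_pos_of_pos ht0 _
      have hQ : (0:ℝ) < (1 - t) ^ (b - 1) := rpow_pos_of_pos (by linarith) _
      have hta : t ^ a = t ^ (a - 1) * t := by
        rw [← Real.rpow_add_one ht0.ne']; ring_nf
      have htb : (1 - t) ^ b = (1 - t) ^ (b - 1) * (1 - t) := by
        rw [← Real.rpow_add_one (by linarith : (1:ℝ) - t ≠ 0)]; ring_nf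
      have key : t ^ (a - 1) * (1 - t) ^ (b - 1) - g' t
          = t ^ (a - 1) * (1 - t) ^ (b - 1) * ((a + b) * (1 - a) * (1 - t) ^ 2)
            / (b * (1 - a + (a + b) * t) ^ 2) := by
        simp only [hg']
        rw [hta, htb]
        field_simp [hb.ne', (by linarith : 0 < 1 - a + t * (a + b)).ne']
        ring
      have hR : (0:ℝ) ≤ t ^ (a - 1) * (1 - t) ^ (b - 1) * ((a + b) * (1 - a) * (1 - t) ^ 2)
          / (b * (1 - a + (a + b) * t) ^ 2) := by
        apply div_nonneg
        · exact mul_nonneg (mul_nonneg hP.le hQ.le)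
            (mul_nonneg (mul_nonneg hab.le (by linarith)) (sq_nonneg _))
        · positivity
      rw [← sub_nonneg, key]; exact hR
    have hmain := sub_le_integral_of_hasDeriv_right_of_le hx1.le hcont
      (fun t ht => (hderiv t ht).hasDerivWithinAt)
      ((intervalIntegrable_iff_integrableOn_Icc_of_le hx1.le).mp hint) hle
    have hg1 : g 1 = 0 := by
      simp [hg, Real.zero_rpow hb.ne']
    have hgx : g x = -((b + 1) / b * (x ^ a * (1 - x) ^ b / (1 - a + (a + b) * x))) := rfl
    rw [hg1, hgx] at hmain
    linarith
  constructor
  · -- lower bound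
    have hxa : x ^ a = x ^ (a - 1) * x := by
      rw [← Real.rpow_add_one hx0.ne']; ring_nf
    have heq : (1 - x) ^ b * x ^ (a - 1) * (1 + (a - 1) * (1 - x) / (1 - a + (a + b) * x)) /
          ((Gamma a * Gamma b / Gamma (a + b)) * b)
        = (1 / (Gamma a * Gamma b / Gamma (a + b)))
          * ((b + 1) / b * (x ^ a * (1 - x) ^ b / (1 - a + (a + b) * x))) := by
      rw [hxa]
      field_simp [(by linarith : 0 < 1 - a + x * (a + b)).ne']
      ring
    rw [heq]
    exact mul_le_mul_of_nonneg_left hlower (by positivity)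
  · -- upper bound
    have heq : (1 - x) ^ b * x ^ (a - 1) / ((Gamma a * Gamma b / Gamma (a + b)) * b)
        = (1 / (Gamma a * Gamma b / Gamma (a + b))) * (x ^ (a - 1) * ((1 - x) ^ b / b)) := by
      field_simp
    rw [heq]
    exact mul_le_mul_of_nonneg_left hupper (by positivity)
end
end
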